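/- Let q be an odd prime power. In PG(2,q) with Q(x) = x_1^2 − x_0 x_2, the matrix A_12 over F_2, with rows indexed by the polar lines of anisotropic points and columns indexed by absolute (isotropic) points (entry 1 iff incident), has 2-rank exactly q. -/

import Mathlib

/-- The quadratic form `Q(x₀,x₁,x₂) = x₁² - x₀x₂` on `F³`. -/
def Qc (F : Type) [Field F] (v : Fin 3 → F) : F := v 1 ^ 2 - v 0 * v 2

/-- The bilinear form associated to `Qc`. -/
def Bc (F : Type) [Field F] (x y : Fin 3 → F) : F :=
  (2 : F)⁻¹ * (Qc F (x + y) - Qc F x - Qc F y)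

/-- A point of `PG(2,q)` is absolute if `Q` vanishes on it. -/
def Absolute (F : Type) [Field F] (P : Projectivization F (Fin 3 → F)) : Prop :=
  Qc F P.rep = 0

/-- A point of `PG(2,q)` is external if `Q` takes a nonzero square value on it. -/
def External (F : Type) [Field F] (P : Projectivization F (Fin 3 → F)) : Prop :=
  IsSquare (Qc F P.rep) ∧ Qc F P.rep ≠ 0

/-- A point of `PG(2,q)` is internal if `Q` takes a non-square value on it. -/
def Internal (F : Type) [Field F] (P : Projectivization F (Fin 3 → F)) : Prop :=
  ¬ IsSquare (Qc F P.rep)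

/-- Lines of `PG(2,q)` are the 2-dimensional subspaces of `F³`. -/
def IsLine (F : Type) [Field F] (L : Submodule F (Fin 3 → F)) : Prop :=
  Module.finrank F ↥L = 2

/-- The number of absolute points on a line. -/
noncomputable def nAbs (F : Type) [Field F] (L : Submodule F (Fin 3 → F)) : ℕ :=
  Nat.card {P : Projectivization F (Fin 3 → F) // Absolute F P ∧ P.submodule ≤ L}

open Classical in
/-- Indicator of a proposition in `F₂`. -/
noncomputable def ind (p : Prop) : ZMod 2 := if p then 1 else 0

variable {F : Type} [Field F]

lemma Qc_smul (a : F) (v : Fin 3 → F) : Qc F (a • v) = a ^ 2 * Qc F v := by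
  simp [Qc, Pi.smul_apply, smul_eq_mul]; ring

lemma Bc_smul_right (a : F) (x y : Fin 3 → F) : Bc F x (a • y) = a * Bc F x y := by
  simp only [Bc, Qc, Pi.add_apply, Pi.smul_apply, smul_eq_mul]; ring

lemma Bc_eval (x y : Fin 3 → F) :
    Bc F x y = (2:F)⁻¹ * (2 * (x 1 * y 1) - x 0 * y 2 - x 2 * y 0) := by
  simp only [Bc, Qc, Pi.add_apply]; ring

section ProjPart
open Projectivization

/-- parametrizing vectors of the conic -/
def cvec (F : Type) [Field F] : Option F → Fin 3 → F
  | none => ![0, 0, 1]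
  | some t => ![1, t, t ^ 2]

lemma cvec_ne_zero (o : Option F) : cvec F o ≠ 0 := by
  cases o with
  | none => intro h; have := congrFun h 2; simp [cvec] at this
  | some t => intro h; have := congrFun h 0; simp [cvec] at this

lemma Qc_cvec (o : Option F) : Qc F (cvec F o) = 0 := by
  cases o <;> simp [cvec, Qc]

noncomputable def cpt (F : Type) [Field F] (o : Option F) : Projectivization F (Fin 3 → F) :=
  Projectivization.mk F (cvec F o) (cvec_ne_zero o)

lemma cpt_rep (o : Option F) : ∃ a : Fˣ, (cpt F o).rep = (a : F) • cvec F o := by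
  obtain ⟨a, ha⟩ := exists_smul_eq_mk_rep F (cvec F o) (cvec_ne_zero o)
  refine ⟨a, ?_⟩
  unfold cpt
  rw [← ha]
  exact Units.smul_def a _

lemma absolute_cpt (o : Option F) : Absolute F (cpt F o) := by
  obtain ⟨a, ha⟩ := cpt_rep (F := F) o
  unfold Absolute
  rw [ha, Qc_smul, Qc_cvec, mul_zero]

lemma cpt_surj (P : Projectivization F (Fin 3 → F)) (hP : Absolute F P) :
    ∃ o, cpt F o = P := by
  set v := P.rep with hv
  have hvne : v ≠ 0 := P.rep_nonzero
  have hQ : v 1 ^ 2 - v 0 * v 2 = 0 := hP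
  by_cases h0 : v 0 = 0
  · have h1 : v 1 = 0 := by
      have h1' : v 1 ^ 2 = 0 := by linear_combination hQ + v 2 * h0
      exact pow_eq_zero_iff (n := 2) (by norm_num) |>.mp h1'
    have h2 : v 2 ≠ 0 := by
      intro h2
      apply hvne
      funext i
      fin_cases i <;> assumption
    refine ⟨none, ?_⟩
    have key : (v 2) • cvec F (none : Option F) = v := by
      funext i; fin_cases i <;> simp [cvec, h0, h1]
    symm
    rw [← P.mk_rep]
    unfold cpt
    rw [mk_eq_mk_iff']
    exact ⟨v 2, key⟩
  · refine ⟨some (v 1 / v 0), ?_⟩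
    have key : (v 0) • cvec F (some (v 1 / v 0)) = v := by
      funext i
      fin_cases i
      · simp [cvec]
      · simp [cvec]
        try field_simp
      · simp [cvec]
        field_simp
        linear_combination hQ
    symm
    rw [← P.mk_rep]
    unfold cpt
    rw [mk_eq_mk_iff']
    exact ⟨v 0, key⟩

lemma cpt_inj : Function.Injective (cpt F) := by
  intro o o' h
  unfold cpt at h
  rw [mk_eq_mk_iff] at h
  obtain ⟨a, ha⟩ := h
  cases o with
  | none => cases o' with
    | none => rfl
    | some t =>
      exfalso
      have h0 := congrFun ha 0
      simp [cvec, Units.smul_def] at h0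
  | some s => cases o' with
    | none =>
      exfalso
      have h0 := congrFun ha 0
      simp [cvec, Units.smul_def] at h0
    | some t =>
      have h0 := congrFun ha 0
      have h1 := congrFun ha 1
      simp [cvec, Units.smul_def] at h0 h1
      rw [h0, Units.val_one, one_mul] at h1
      rw [h1]

end ProjPart

lemma ind_congr {p q : Prop} (h : p ↔ q) : ind p = ind q := by
  unfold ind
  split <;> split <;> tauto

lemma inv2_mul_eq_zero (htwo : (2:F) ≠ 0) (a : F) : (2:F)⁻¹ * a = 0 ↔ a = 0 := by
  rw [mul_eq_zero]
  simp [inv_eq_zero, htwo]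

lemma cond_some (htwo : (2:F) ≠ 0) (x : Fin 3 → F) (t : F) :
    Bc F x (cvec F (some t)) = 0 ↔ x 0 * t ^ 2 - 2 * x 1 * t + x 2 = 0 := by
  rw [Bc_eval]
  have e0 : cvec F (some t) 0 = 1 := rfl
  have e1 : cvec F (some t) 1 = t := rfl
  have e2 : cvec F (some t) 2 = t ^ 2 := rfl
  rw [e0, e1, e2, inv2_mul_eq_zero htwo]
  constructor <;> intro h <;> linear_combination -h

lemma cond_none (htwo : (2:F) ≠ 0) (x : Fin 3 → F) :
    Bc F x (cvec F none) = 0 ↔ x 0 = 0 := by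
  rw [Bc_eval]
  have e0 : cvec F (none : Option F) 0 = 0 := rfl
  have e1 : cvec F (none : Option F) 1 = 0 := rfl
  have e2 : cvec F (none : Option F) 2 = 1 := rfl
  rw [e0, e1, e2, inv2_mul_eq_zero htwo]
  constructor <;> intro h <;> linear_combination -h

lemma entry_iff (x : Fin 3 → F) (o : Option F) :
    Bc F x (cpt F o).rep = 0 ↔ Bc F x (cvec F o) = 0 := by
  obtain ⟨a, ha⟩ := cpt_rep (F := F) o
  rw [ha, Bc_smul_right, mul_eq_zero]
  simp [a.ne_zero]

section counting
variable [Fintype F] [DecidableEq F]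

lemma quad_filter_even (htwo : (2:F) ≠ 0) (a b c : F) (ha : a ≠ 0) (hd : b ^ 2 - a * c ≠ 0) :
    Even (Finset.univ.filter (fun t : F => a * t ^ 2 - 2 * b * t + c = 0)).card := by
  by_cases hex : ∃ t0 : F, a * t0 ^ 2 - 2 * b * t0 + c = 0
  · obtain ⟨t0, h0⟩ := hex
    set t1 : F := 2 * b / a - t0 with ht1
    have hne : t0 ≠ t1 := by
      intro h
      rw [ht1] at h
      field_simp at h
      have hb : a * t0 = b := by
        have h2 : 2 * (a * t0) = 2 * b := by linear_combination h
        exact mul_left_cancel₀ htwo h2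
      have h0' : a ^ 2 * (a * c - b ^ 2) = 0 := by
        linear_combination (a ^ 3) * h0 + (a ^ 2 * (b - a * t0)) * hb
      rcases mul_eq_zero.mp h0' with h' | h'
      · exact ha (pow_eq_zero_iff (n := 2) (by norm_num) |>.mp h')
      · exact hd (by linear_combination -h')
    have key : ∀ t : F, a * t ^ 2 - 2 * b * t + c = a * (t - t0) * (t - t1) := by
      intro t
      rw [ht1]
      have hX : a * (2 * b / a) = 2 * b := by field_simp
      linear_combination h0 + (t - t0) * hX
    have hfil : Finset.univ.filter (fun t : F => a * t ^ 2 - 2 * b * t + c = 0)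
        = {t0, t1} := by
      ext t
      simp only [Finset.mem_filter, Finset.mem_univ, true_and, Finset.mem_insert,
        Finset.mem_singleton, key t, mul_eq_zero, sub_eq_zero]
      constructor
      · rintro ((h | h) | h)
        · exact absurd h ha
        · exact Or.inl h
        · exact Or.inr h
      · rintro (h | h)
        · exact Or.inl (Or.inr h)
        · exact Or.inr h
    rw [hfil, Finset.card_insert_of_notMem (by simpa using hne), Finset.card_singleton]
    exact ⟨1, rfl⟩
  · have : Finset.univ.filter (fun t : F => a * t ^ 2 - 2 * b * t + c = 0) = ∅ := by
      apply Finset.filter_eq_empty_iff.mpr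
      intro t _
      exact fun h => hex ⟨t, h⟩
    rw [this]
    simp

lemma lin_filter_card (htwo : (2:F) ≠ 0) (b c : F) (hb : b ≠ 0) :
    (Finset.univ.filter (fun t : F => (0:F) * t ^ 2 - 2 * b * t + c = 0)).card = 1 := by
  have hfil : Finset.univ.filter (fun t : F => (0:F) * t ^ 2 - 2 * b * t + c = 0)
      = {c / (2 * b)} := by
    ext t
    simp only [Finset.mem_filter, Finset.mem_univ, true_and, Finset.mem_singleton]
    constructor
    · intro h
      field_simp
      linear_combination -h
    · intro h
      rw [h]
      field_simp
      ring
  rw [hfil, Finset.card_singleton]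
end counting

open Classical in
lemma sum_ind {α : Type*} [Fintype α] (p : α → Prop) :
    ∑ a : α, ind (p a) = ((Finset.univ.filter p).card : ZMod 2) := by
  unfold ind
  rw [Finset.sum_boole]

lemma natCast_even_zmod2 {n : ℕ} (h : Even n) : (n : ZMod 2) = 0 := by
  obtain ⟨k, hk⟩ := h
  subst hk
  push_cast
  ring_nf
  rw [show (2 : ZMod 2) = 0 from rfl, mul_zero]

lemma Bc_smul_left (a : F) (x y : Fin 3 → F) : Bc F (a • x) y = a * Bc F x y := by
  simp only [Bc, Qc, Pi.add_apply, Pi.smul_apply, smul_eq_mul]; ring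

section rowsum
variable [Fintype F]

open Classical in
lemma rowsum (htwo : (2:F) ≠ 0) (x : Fin 3 → F) (hx : Qc F x ≠ 0) :
    ∑ o : Option F, ind (Bc F x (cvec F o) = 0) = 0 := by
  classical
  rw [Fintype.sum_option]
  rw [ind_congr (cond_none htwo x)]
  rw [Finset.sum_congr rfl (fun t _ => ind_congr (cond_some htwo x t))]
  rw [sum_ind]
  by_cases h0 : x 0 = 0
  · have hb : x 1 ≠ 0 := by
      intro h1
      apply hx
      unfold Qc
      rw [h0, h1]
      ring
    have hfe : (Finset.univ.filter (fun t : F => x 0 * t ^ 2 - 2 * x 1 * t + x 2 = 0)).card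
        = (Finset.univ.filter (fun t : F => (0:F) * t ^ 2 - 2 * x 1 * t + x 2 = 0)).card := by
      congr 1
      apply Finset.filter_congr
      intro t _
      simp [h0]
    rw [hfe, lin_filter_card htwo (x 1) (x 2) hb]
    have h1 : ind (x 0 = 0) = 1 := by unfold ind; simp [h0]
    rw [h1]
    rfl
  · have hd : x 1 ^ 2 - x 0 * x 2 ≠ 0 := hx
    have hev := quad_filter_even htwo (x 0) (x 1) (x 2) h0 hd
    rw [natCast_even_zmod2 hev]
    have h1 : ind (x 0 = 0) = 0 := by unfold ind; simp [h0]
    rw [h1]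
    ring
end rowsum

/-- the summation functional -/
noncomputable def sumLin (κ : Type*) [Fintype κ] : (κ → ZMod 2) →ₗ[ZMod 2] ZMod 2 where
  toFun := fun v => ∑ R, v R
  map_add' := by intros; simp [Finset.sum_add_distrib]
  map_smul' := by intros; simp [Finset.mul_sum]


/-- The matrix `A₁₂` over `F₂`, with rows indexed by the polar lines of the
anisotropic points of `PG(2,q)` and columns by the absolute points (entry `1` iff
incident, i.e. `⟨P,R⟩ = 0`), has 2-rank exactly `q`. -/
theorem stmt19 (F : Type) [Field F] [Fintype F] (q : ℕ)
    (hq : Fintype.card F = q) (hodd : Odd q)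
    [Fintype {P : Projectivization F (Fin 3 → F) // Qc F P.rep ≠ 0}]
    [Fintype {P : Projectivization F (Fin 3 → F) // Absolute F P}] :
    (Matrix.of fun (P : {P : Projectivization F (Fin 3 → F) // Qc F P.rep ≠ 0})
        (R : {P : Projectivization F (Fin 3 → F) // Absolute F P}) =>
        ind (Bc F P.1.rep R.1.rep = 0)).rank = q := by
  classical
  have hchar : ringChar F ≠ 2 := by
    intro h
    have h2 := FiniteField.even_card_of_char_two h
    rw [hq] at h2
    rw [Nat.odd_iff] at hodd
    omega
  have htwo : (2 : F) ≠ 0 := by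
    intro h2
    exact hchar (CharP.ringChar_of_prime_eq_zero Nat.prime_two (by exact_mod_cast h2))
  let ι := {P : Projectivization F (Fin 3 → F) // Qc F P.rep ≠ 0}
  let κ := {P : Projectivization F (Fin 3 → F) // Absolute F P}
  set M : Matrix ι κ (ZMod 2) := Matrix.of fun (P : ι) (R : κ) =>
      ind (Bc F P.1.rep R.1.rep = 0) with hM
  have hinj : Function.Injective (fun o : Option F => (⟨cpt F o, absolute_cpt o⟩ : κ)) := by
    intro o o' h
    exact cpt_inj (congrArg Subtype.val h)
  have hsurj : Function.Surjective (fun o : Option F => (⟨cpt F o, absolute_cpt o⟩ : κ)) := by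
    rintro ⟨P, hP⟩
    obtain ⟨o, ho⟩ := cpt_surj P hP
    exact ⟨o, Subtype.ext ho⟩
  set e : Option F ≃ κ := Equiv.ofBijective _ ⟨hinj, hsurj⟩ with hee
  have he : ∀ o, (e o).1 = cpt F o := fun o => rfl
  have hcard : Fintype.card κ = q + 1 := by
    rw [← Fintype.card_of_bijective (⟨hinj, hsurj⟩ : Function.Bijective _),
      Fintype.card_option, hq]
  rw [Matrix.rank_eq_finrank_span_row]
  have hrow : ∀ P : ι, sumLin κ (M P) = 0 := by
    intro P
    show ∑ R : κ, M P R = 0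
    rw [← Equiv.sum_comp e (fun R => M P R)]
    have hterm : ∀ o : Option F, M P (e o) = ind (Bc F P.1.rep (cvec F o) = 0) := by
      intro o
      show ind (Bc F P.1.rep (cpt F o).rep = 0) = _
      exact ind_congr (entry_iff _ o)
    rw [Finset.sum_congr rfl (fun o _ => hterm o)]
    exact rowsum htwo P.1.rep P.2
  have hker : Submodule.span (ZMod 2) (Set.range M) ≤ LinearMap.ker (sumLin κ) := by
    rw [Submodule.span_le]
    rintro _ ⟨P, rfl⟩
    exact hrow P
  have hfker : Module.finrank (ZMod 2) (LinearMap.ker (sumLin κ)) = q := by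
    have hsur : Function.Surjective (sumLin κ) := by
      intro z
      refine ⟨fun R => if R = e none then z else 0, ?_⟩
      show ∑ R : κ, (if R = e none then z else 0) = z
      rw [Fintype.sum_eq_single (e none) (fun R hR => if_neg hR)]
      exact if_pos rfl
    have hr := LinearMap.finrank_range_add_finrank_ker (sumLin κ)
    rw [LinearMap.range_eq_top.mpr hsur, finrank_top, Module.finrank_self,
      Module.finrank_pi, hcard] at hr
    omega
  apply le_antisymm
  · calc Module.finrank (ZMod 2) (Submodule.span (ZMod 2) (Set.range M))
        ≤ Module.finrank (ZMod 2) (LinearMap.ker (sumLin κ)) :=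
          Submodule.finrank_mono hker
      _ = q := hfker
  · -- lower bound via independent rows
    set wv : F → (Fin 3 → F) := fun t => ![0, 1, 2 * t] with hwv
    have hwne : ∀ t, wv t ≠ 0 := by
      intro t h
      have := congrFun h 1
      simp [hwv] at this
    have hQwv : ∀ t, Qc F (wv t) = 1 := by
      intro t
      simp [Qc, hwv]
    have hQPt : ∀ t, Qc F (Projectivization.mk F (wv t) (hwne t)).rep ≠ 0 := by
      intro t
      obtain ⟨a, ha⟩ := Projectivization.exists_smul_eq_mk_rep F (wv t) (hwne t)
      rw [← ha, Units.smul_def, Qc_smul, hQwv, mul_one]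
      intro h
      exact a.ne_zero (pow_eq_zero_iff (n := 2) (by norm_num) |>.mp h)
    set g : F → (κ → ZMod 2) := fun t => M ⟨Projectivization.mk F (wv t) (hwne t), hQPt t⟩
      with hg
    have hval : ∀ t s, g t (e (some s)) = ind (s = t) := by
      intro t s
      show ind (Bc F (Projectivization.mk F (wv t) (hwne t)).rep (cpt F (some s)).rep = 0)
        = ind (s = t)
      apply ind_congr
      obtain ⟨a, ha⟩ := Projectivization.exists_smul_eq_mk_rep F (wv t) (hwne t)
      rw [← ha, Units.smul_def, Bc_smul_left, mul_eq_zero,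
        or_iff_right (Units.ne_zero a), entry_iff, cond_some htwo]
      have e0 : wv t 0 = 0 := rfl
      have e1 : wv t 1 = 1 := rfl
      have e2 : wv t 2 = 2 * t := rfl
      rw [e0, e1, e2]
      constructor
      · intro h
        have h2 : 2 * s = 2 * t := by linear_combination -h
        exact mul_left_cancel₀ htwo h2
      · rintro rfl
        ring
    have hLI : LinearIndependent (ZMod 2) g := by
      rw [Fintype.linearIndependent_iff]
      intro cfs hsum t
      have hc := congrFun hsum (e (some t))
      rw [Finset.sum_apply] at hc
      simp only [Pi.smul_apply, smul_eq_mul, Pi.zero_apply] at hc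
      rw [Finset.sum_eq_single t (fun s _ hst => by
        rw [hval s t, ind_congr (show (t = s) ↔ False by simp [Ne.symm hst]),
          show ind False = 0 from by simp [ind], mul_zero])
        (fun h => absurd (Finset.mem_univ t) h)] at hc
      rw [hval t t, ind_congr (show (t = t) ↔ True by simp),
        show ind True = 1 from by simp [ind], mul_one] at hc
      exact hc
    have hspan := finrank_span_eq_card hLI
    have hle : Submodule.span (ZMod 2) (Set.range g)
        ≤ Submodule.span (ZMod 2) (Set.range M) := by
      rw [Submodule.span_le]
      rintro _ ⟨t, rfl⟩
      exact Submodule.subset_span ⟨_, rfl⟩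
    calc q = Fintype.card F := hq.symm
      _ = Module.finrank (ZMod 2) (Submodule.span (ZMod 2) (Set.range g)) := hspan.symm
      _ ≤ Module.finrank (ZMod 2) (Submodule.span (ZMod 2) (Set.range M)) :=
          Submodule.finrank_mono hle
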